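/- For every vertex label u of T_n, the positive entries of u are all equal and the negative entries of u are all equal (each such value occurring at least once). -/

import Mathlib

open Finset


open Finset

/-- The vector `w(n)` (as a function of the index `i`): for odd `n`,
`w(n)_i = (n-1)/2` for even `i` and `-(n+1)/2` for odd `i` (as in Table 1 of the paper); `w(2) = (1,-1)`;
`w(4) = (1,-1,-1,1)`; for even `n = 2m > 4`, `w(n)_i = w(m)_{i mod m}`. -/
def w (n i : ℕ) : ℤ :=
  if h2 : n < 2 then 0
  else if n = 2 then (if i = 0 then 1 else -1)
  else if n = 4 then (if i = 0 ∨ i = 3 then 1 else -1)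
  else if n % 2 = 1 then (if i % 2 = 0 then ((n : ℤ) - 1) / 2 else -(((n : ℤ) + 1) / 2))
  else w (n / 2) (i % (n / 2))
termination_by n
decreasing_by omega

/-- Indices where `u` is positive. -/
def posIdx {n : ℕ} (u : Fin n → ℤ) : Finset (Fin n) :=
  Finset.univ.filter (fun i => 0 < u i)

/-- Indices where `u` is negative. -/
def negIdx {n : ℕ} (u : Fin n → ℤ) : Finset (Fin n) :=
  Finset.univ.filter (fun i => u i < 0)

/-- The left child of a vertex labeled `u`: supported on the positive support
of `u`, with the `r`-th (in increasing index order) nonzero entry equal to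
`w(a')_r` where `a'` is the size of the positive support. -/
def leftChild {n : ℕ} (u : Fin n → ℤ) : Fin n → ℤ := fun i =>
  if 0 < u i then w (posIdx u).card ((posIdx u).filter (fun j => j < i)).card else 0

/-- The right child of a vertex labeled `u`: supported on the negative support
of `u`, with the `r`-th nonzero entry equal to `w(a'')_r` where `a''` is the
size of the negative support. -/
def rightChild {n : ℕ} (u : Fin n → ℤ) : Fin n → ℤ := fun i =>
  if u i < 0 then w (negIdx u).card ((negIdx u).filter (fun j => j < i)).card else 0

/-- Rooted binary trees with vertex labels in `α`. -/
inductive BT (α : Type) : Type where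
  | node (label : α) (l r : Option (BT α)) : BT α

/-- Build the labeled tree below the vertex labeled `u` (with enough fuel this
is the tree described in the paper: a left child exists iff the positive
support has size at least `2`, a right child iff the negative support does). -/
def build (n : ℕ) : ℕ → (Fin n → ℤ) → BT (Fin n → ℤ)
  | 0, u => .node u none none
  | f + 1, u =>
    .node u
      (if 2 ≤ (posIdx u).card then some (build n f (leftChild u)) else none)
      (if 2 ≤ (negIdx u).card then some (build n f (rightChild u)) else none)

/-- The tree `T_n`, rooted at `w(n)`. (Fuel `n` suffices since the number of
nonzero entries strictly decreases from parent to child.) -/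
def T (n : ℕ) : BT (Fin n → ℤ) := build n n (fun i => w n i)

/-- The list of vertex labels of a tree in depth-first (preorder) order. -/
def labels {α : Type} : BT α → List α
  | .node a none none => [a]
  | .node a (some l) none => a :: labels l
  | .node a none (some r) => a :: labels r
  | .node a (some l) (some r) => a :: (labels l ++ labels r)

/-- A vertex label is skew-symmetric if its nonzero entries form the vector
`w(2) = (1,-1)`. -/
def IsSkew {n : ℕ} (u : Fin n → ℤ) : Prop :=
  ∃ i j : Fin n, i < j ∧ u i = 1 ∧ u j = -1 ∧ ∀ k, k ≠ i → k ≠ j → u k = 0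

instance {n : ℕ} (u : Fin n → ℤ) : Decidable (IsSkew u) := by
  unfold IsSkew; infer_instance

/-- For every vertex label `u` of `T_n`, the positive entries of `u` are all
equal and the negative entries of `u` are all equal, each value occurring at
least once. -/

lemma w_vals : ∀ n, 2 ≤ n → ∃ p q : ℤ, 0 < p ∧ q < 0 ∧
    (∃ i < n, w n i = p) ∧ (∃ i < n, w n i = q) ∧ ∀ i < n, w n i = p ∨ w n i = q := by
  intro n
  induction n using Nat.strong_induction_on with
  | _ n ih =>
    intro hn
    by_cases h2 : n = 2
    · subst h2
      refine ⟨1, -1, by norm_num, by norm_num, ⟨0, by norm_num, by simp [w]⟩,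
        ⟨1, by norm_num, by simp [w]⟩, ?_⟩
      intro i _
      rw [w]; split_ifs <;> simp_all
    by_cases h4 : n = 4
    · subst h4
      refine ⟨1, -1, by norm_num, by norm_num, ⟨0, by norm_num, by simp [w]⟩,
        ⟨1, by norm_num, by simp [w]⟩, ?_⟩
      intro i _
      rw [w]; split_ifs <;> simp_all
    by_cases hodd : n % 2 = 1
    · refine ⟨((n : ℤ) - 1) / 2, -(((n : ℤ) + 1) / 2), by omega, by omega,
        ⟨0, by omega, ?_⟩, ⟨1, by omega, ?_⟩, ?_⟩
      · rw [w]; simp [h2, h4, hodd]; omega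
      · rw [w]; simp [h2, h4, hodd]; omega
      · intro i _
        rw [w]; simp only [h2, h4, hodd]
        split_ifs with h <;> simp_all <;> omega
    · have hm : 2 ≤ n / 2 ∧ n / 2 < n := by omega
      obtain ⟨p, q, hp, hq, ⟨ip, hip, hwp⟩, ⟨iq, hiq, hwq⟩, hall⟩ := ih (n / 2) hm.2 hm.1
      refine ⟨p, q, hp, hq, ⟨ip, by omega, ?_⟩, ⟨iq, by omega, ?_⟩, ?_⟩
      · rw [w]; simp only [h2, h4, hodd]
        rw [Nat.mod_eq_of_lt hip]; simp_all; omega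
      · rw [w]; simp only [h2, h4, hodd]
        rw [Nat.mod_eq_of_lt hiq]; simp_all; omega
      · intro i _
        rw [w]; simp only [h2, h4, hodd]
        have := hall (i % (n / 2)) (Nat.mod_lt _ (by omega))
        simp_all; omega

lemma rank_lt {n : ℕ} (s : Finset (Fin n)) {i : Fin n} (hi : i ∈ s) :
    (s.filter (fun j => j < i)).card < s.card := by
  refine Finset.card_lt_card ?_
  rw [Finset.ssubset_iff_of_subset (Finset.filter_subset _ _)]
  exact ⟨i, hi, by simp⟩

lemma rank_surj {n : ℕ} (s : Finset (Fin n)) {k : ℕ} (hk : k < s.card) :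
    ∃ i ∈ s, (s.filter (fun j => j < i)).card = k := by
  set f : Fin n → ℕ := fun i => (s.filter (fun j => j < i)).card with hf
  have hmono : ∀ i ∈ s, ∀ i' ∈ s, i < i' → f i < f i' := by
    intro i hi i' _ hlt
    refine Finset.card_lt_card ?_
    have hsub : s.filter (fun j => j < i) ⊆ s.filter (fun j => j < i') := by
      intro j hj
      simp only [Finset.mem_filter] at hj ⊢
      exact ⟨hj.1, lt_trans hj.2 hlt⟩
    rw [Finset.ssubset_iff_of_subset hsub]
    exact ⟨i, by simp [hi, hlt], by simp⟩
  have hinj : Set.InjOn f s := by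
    intro i hi i' hi' he
    rcases lt_trichotomy i i' with h | h | h
    · exact absurd he (ne_of_lt (hmono i hi i' hi' h))
    · exact h
    · exact absurd he.symm (ne_of_lt (hmono i' hi' i hi h))
  have hsub : s.image f ⊆ Finset.range s.card := by
    intro x hx
    obtain ⟨i, hi, rfl⟩ := Finset.mem_image.1 hx
    exact Finset.mem_range.2 (rank_lt s hi)
  have hcard : (s.image f).card = (Finset.range s.card).card := by
    rw [Finset.card_image_of_injOn hinj, Finset.card_range]
  have him : s.image f = Finset.range s.card :=
    Finset.eq_of_subset_of_card_le hsub (le_of_eq hcard.symm)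
  have hk' : k ∈ s.image f := him ▸ Finset.mem_range.2 hk
  obtain ⟨i, hi, hik⟩ := Finset.mem_image.1 hk'
  exact ⟨i, hi, hik⟩

def Pprop {n : ℕ} (u : Fin n → ℤ) : Prop :=
  (∃ p : ℤ, 0 < p ∧ (∃ i, u i = p) ∧ ∀ i, 0 < u i → u i = p) ∧
  (∃ q : ℤ, q < 0 ∧ (∃ i, u i = q) ∧ ∀ i, u i < 0 → u i = q)

lemma left_P {n : ℕ} (u : Fin n → ℤ) (h : 2 ≤ (posIdx u).card) : Pprop (leftChild u) := by
  obtain ⟨p, q, hp, hq, ⟨kp, hkp, hwp⟩, ⟨kq, hkq, hwq⟩, hall⟩ := w_vals _ h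
  constructor
  · refine ⟨p, hp, ?_, ?_⟩
    · obtain ⟨i, hi, hri⟩ := rank_surj (posIdx u) hkp
      have hpos : 0 < u i := by simpa [posIdx] using hi
      exact ⟨i, by simp [leftChild, hpos, hri, hwp]⟩
    · intro i hpos'
      have hui : 0 < u i := by
        by_contra hui
        simp [leftChild, hui] at hpos'
      have hmem : i ∈ posIdx u := by simp [posIdx, hui]
      have hr := rank_lt (posIdx u) hmem
      rcases hall _ hr with h' | h'
      · simpa [leftChild, if_pos hui] using h'
      · exfalso
        rw [leftChild] at hpos'
        rw [if_pos hui, h'] at hpos'; omega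
  · refine ⟨q, hq, ?_, ?_⟩
    · obtain ⟨i, hi, hri⟩ := rank_surj (posIdx u) hkq
      have hpos : 0 < u i := by simpa [posIdx] using hi
      exact ⟨i, by simp [leftChild, hpos, hri, hwq]⟩
    · intro i hneg'
      have hui : 0 < u i := by
        by_contra hui
        simp [leftChild, hui] at hneg'
      have hmem : i ∈ posIdx u := by simp [posIdx, hui]
      have hr := rank_lt (posIdx u) hmem
      rcases hall _ hr with h' | h'
      · exfalso
        rw [leftChild] at hneg'
        rw [if_pos hui, h'] at hneg'; omega
      · simpa [leftChild, if_pos hui] using h'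

lemma right_P {n : ℕ} (u : Fin n → ℤ) (h : 2 ≤ (negIdx u).card) : Pprop (rightChild u) := by
  obtain ⟨p, q, hp, hq, ⟨kp, hkp, hwp⟩, ⟨kq, hkq, hwq⟩, hall⟩ := w_vals _ h
  constructor
  · refine ⟨p, hp, ?_, ?_⟩
    · obtain ⟨i, hi, hri⟩ := rank_surj (negIdx u) hkp
      have hneg : u i < 0 := by simpa [negIdx] using hi
      exact ⟨i, by simp [rightChild, hneg, hri, hwp]⟩
    · intro i hpos'
      have hui : u i < 0 := by
        by_contra hui
        simp [rightChild, hui] at hpos'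
      have hmem : i ∈ negIdx u := by simp [negIdx, hui]
      have hr := rank_lt (negIdx u) hmem
      rcases hall _ hr with h' | h'
      · simpa [rightChild, if_pos hui] using h'
      · exfalso
        rw [rightChild] at hpos'
        rw [if_pos hui, h'] at hpos'; omega
  · refine ⟨q, hq, ?_, ?_⟩
    · obtain ⟨i, hi, hri⟩ := rank_surj (negIdx u) hkq
      have hneg : u i < 0 := by simpa [negIdx] using hi
      exact ⟨i, by simp [rightChild, hneg, hri, hwq]⟩
    · intro i hneg'
      have hui : u i < 0 := by
        by_contra hui
        simp [rightChild, hui] at hneg'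
      have hmem : i ∈ negIdx u := by simp [negIdx, hui]
      have hr := rank_lt (negIdx u) hmem
      rcases hall _ hr with h' | h'
      · exfalso
        rw [rightChild] at hneg'
        rw [if_pos hui, h'] at hneg'; omega
      · simpa [rightChild, if_pos hui] using h'

lemma build_P {n : ℕ} : ∀ f (u : Fin n → ℤ), Pprop u → ∀ v ∈ labels (build n f u), Pprop v := by
  intro f
  induction f with
  | zero =>
    intro u hu v hv
    simp only [build, labels, List.mem_singleton] at hv
    subst hv; exact hu
  | succ f ih =>
    intro u hu v hv
    rw [build] at hv
    by_cases h1 : 2 ≤ (posIdx u).card <;> by_cases h2 : 2 ≤ (negIdx u).card <;>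
      simp only [h1, h2, if_true, if_false, labels, List.mem_cons, List.mem_append,
        List.mem_singleton, List.not_mem_nil, or_false] at hv
    · rcases hv with rfl | hv | hv
      · exact hu
      · exact ih _ (left_P u h1) v hv
      · exact ih _ (right_P u h2) v hv
    · rcases hv with rfl | hv
      · exact hu
      · exact ih _ (left_P u h1) v hv
    · rcases hv with rfl | hv
      · exact hu
      · exact ih _ (right_P u h2) v hv
    · subst hv; exact hu

theorem stmt10 (n : ℕ) (hn : 2 ≤ n) :
    ∀ u ∈ labels (T n),
      (∃ p : ℤ, 0 < p ∧ (∃ i, u i = p) ∧ ∀ i, 0 < u i → u i = p) ∧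
      (∃ q : ℤ, q < 0 ∧ (∃ i, u i = q) ∧ ∀ i, u i < 0 → u i = q) := by
  have hP : Pprop (fun i : Fin n => w n i) := by
    obtain ⟨p, q, hp, hq, ⟨ip, hip, hwp⟩, ⟨iq, hiq, hwq⟩, hall⟩ := w_vals n hn
    constructor
    · refine ⟨p, hp, ⟨⟨ip, hip⟩, hwp⟩, fun i hi => ?_⟩
      rcases hall i i.isLt with h | h
      · exact h
      · simp only [] at hi; rw [h] at hi; omega
    · refine ⟨q, hq, ⟨⟨iq, hiq⟩, hwq⟩, fun i hi => ?_⟩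
      rcases hall i i.isLt with h | h
      · simp only [] at hi; rw [h] at hi; omega
      · exact h
  intro u hu
  rw [T] at hu
  exact build_P n _ hP u hu
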